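/- Let Γ and ψ(Z), ψ*(Z) be random variables all bounded in absolute value by M, where ψ*(Z) = E[Γ | Z]. Define X = (Γ - ψ(Z))² - (Γ - ψ*(Z))². Then E[X] = E[(ψ*(Z) - ψ(Z))²] ≥ 0 and Var(X) ≤ 16 M² E[X]. -/
import Mathlib

open MeasureTheory ProbabilityTheory

lemma my_variance_congr {Ω : Type*} {_ : MeasurableSpace Ω} {μ : Measure Ω} {X Y : Ω → ℝ}
    (h : X =ᵐ[μ] Y) : variance X μ = variance Y μ := by
  have hint : μ[X] = μ[Y] := integral_congr_ae h
  unfold variance evariance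
  rw [hint, lintegral_congr_ae]
  filter_upwards [h] with ω hω
  rw [hω]

lemma my_integrable_of_bdd {Ω : Type*} {_ : MeasurableSpace Ω} {μ : Measure Ω}
    [IsFiniteMeasure μ] {f : Ω → ℝ} {C : ℝ} (hm : AEStronglyMeasurable f μ)
    (hb : ∀ᵐ ω ∂μ, |f ω| ≤ C) : Integrable f μ :=
  ⟨hm, HasFiniteIntegral.of_bounded (C := C) (by simpa [Real.norm_eq_abs] using hb)⟩

/-- If `Γ`, `ψ(Z)`, `ψ*(Z)` are bounded by `M` and `ψ*(Z) = E[Γ | σ(Z)]`, then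
`X = (Γ - ψ(Z))² - (Γ - ψ*(Z))²` satisfies `E[X] = E[(ψ*(Z) - ψ(Z))²] ≥ 0` and
`Var(X) ≤ 16 M² E[X]`. -/
theorem stmt1
    {Ω β : Type*} [MeasurableSpace Ω] [mβ : MeasurableSpace β]
    (μ : Measure Ω) [IsProbabilityMeasure μ]
    (M : ℝ)
    (Z : Ω → β) (hZ : Measurable Z)
    (Γ : Ω → ℝ) (hΓmeas : Measurable Γ) (hΓbd : ∀ᵐ ω ∂μ, |Γ ω| ≤ M)
    (ψ : β → ℝ) (hψmeas : Measurable ψ) (hψbd : ∀ z, |ψ z| ≤ M)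
    (ψstar : Ω → ℝ)
    (hψstar : ψstar =ᵐ[μ] μ[Γ | MeasurableSpace.comap Z mβ])
    (X : Ω → ℝ)
    (hX : ∀ ω, X ω = (Γ ω - ψ (Z ω))^2 - (Γ ω - ψstar ω)^2) :
    (∫ ω, X ω ∂μ = ∫ ω, (ψstar ω - ψ (Z ω))^2 ∂μ) ∧
    0 ≤ ∫ ω, X ω ∂μ ∧
    variance X μ ≤ 16 * M^2 * ∫ ω, X ω ∂μ := by
  have hm : MeasurableSpace.comap Z mβ ≤ _ := hZ.comap_le
  set c := μ[Γ | MeasurableSpace.comap Z mβ] with hc_def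
  have hM0 : 0 ≤ M := by
    obtain ⟨ω, hω⟩ := hΓbd.exists
    exact (abs_nonneg _).trans hω
  have hΓint : Integrable Γ μ := my_integrable_of_bdd hΓmeas.aestronglyMeasurable hΓbd
  have hcm : StronglyMeasurable[MeasurableSpace.comap Z mβ] c := stronglyMeasurable_condExp
  have hcmeas : Measurable c := (hcm.mono hm).measurable
  have hcbd : ∀ᵐ ω ∂μ, |c ω| ≤ M :=
    ae_bdd_condExp_of_ae_bdd (m := MeasurableSpace.comap Z mβ) (μ := μ) (R := ⟨M, hM0⟩) hΓbd
  have hZm : Measurable[MeasurableSpace.comap Z mβ] Z := fun s hs => ⟨s, hs, rfl⟩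
  have hψZm : StronglyMeasurable[MeasurableSpace.comap Z mβ] (fun ω => ψ (Z ω)) :=
    (hψmeas.comp hZm).stronglyMeasurable
  set D : Ω → ℝ := fun ω => c ω - ψ (Z ω) with hD_def
  have hDm : StronglyMeasurable[MeasurableSpace.comap Z mβ] D := hcm.sub hψZm
  have hDmeas : Measurable D := hcmeas.sub (hψmeas.comp hZ)
  have hDbd : ∀ᵐ ω ∂μ, |D ω| ≤ 2 * M := by
    filter_upwards [hcbd] with ω h
    have h2 := hψbd (Z ω)
    calc |c ω - ψ (Z ω)| ≤ |c ω| + |ψ (Z ω)| := abs_sub _ _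
      _ ≤ 2 * M := by linarith
  -- key orthogonality
  have hDΓint : Integrable (D * Γ) μ := by
    refine my_integrable_of_bdd (C := 2 * M * M) ((hDmeas.mul hΓmeas).aestronglyMeasurable) ?_
    filter_upwards [hDbd, hΓbd] with ω h1 h2
    calc |D ω * Γ ω| = |D ω| * |Γ ω| := abs_mul _ _
      _ ≤ (2 * M) * M := mul_le_mul h1 h2 (abs_nonneg _) (by positivity)
  have hDcint : Integrable (fun ω => D ω * c ω) μ := by
    refine my_integrable_of_bdd (C := 2 * M * M) ((hDmeas.mul hcmeas).aestronglyMeasurable) ?_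
    filter_upwards [hDbd, hcbd] with ω h1 h2
    calc |D ω * c ω| = |D ω| * |c ω| := abs_mul _ _
      _ ≤ (2 * M) * M := mul_le_mul h1 h2 (abs_nonneg _) (by positivity)
  have hkey : ∫ ω, D ω * Γ ω ∂μ = ∫ ω, D ω * c ω ∂μ := by
    have h1 := condExp_mul_of_stronglyMeasurable_left (μ := μ) hDm hDΓint hΓint
    have h2 := integral_condExp (μ := μ) (f := D * Γ) hm
    calc ∫ ω, D ω * Γ ω ∂μ = ∫ ω, (μ[D * Γ | MeasurableSpace.comap Z mβ]) ω ∂μ := h2.symm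
      _ = ∫ ω, D ω * c ω ∂μ := integral_congr_ae h1
  have hD2int : Integrable (fun ω => D ω ^ 2) μ := by
    refine my_integrable_of_bdd (C := (2 * M) ^ 2) ((hDmeas.pow_const 2).aestronglyMeasurable) ?_
    filter_upwards [hDbd] with ω h
    rw [abs_of_nonneg (sq_nonneg _)]
    calc D ω ^ 2 = |D ω| ^ 2 := (sq_abs _).symm
      _ ≤ (2 * M) ^ 2 := by apply pow_le_pow_left₀ (abs_nonneg _) h
  have hXeq : X =ᵐ[μ] fun ω => D ω ^ 2 + 2 * (D ω * Γ ω - D ω * c ω) := by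
    filter_upwards [hψstar] with ω h
    rw [hX ω, h]
    simp only [hD_def]
    ring
  have h2int : Integrable (fun ω => 2 * (D ω * Γ ω - D ω * c ω)) μ := by
    exact (hDΓint.sub hDcint).const_mul 2
  have hDΓint' : Integrable (fun ω => D ω * Γ ω) μ := hDΓint
  have hintX : ∫ ω, X ω ∂μ = ∫ ω, D ω ^ 2 ∂μ := by
    rw [integral_congr_ae hXeq, integral_add hD2int h2int, integral_const_mul,
      integral_sub hDΓint' hDcint, hkey]
    ring
  have hRHS : ∫ ω, (ψstar ω - ψ (Z ω))^2 ∂μ = ∫ ω, D ω ^ 2 ∂μ := by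
    refine integral_congr_ae ?_
    filter_upwards [hψstar] with ω h
    rw [h]
  refine ⟨by rw [hintX, hRHS], by rw [hintX]; exact integral_nonneg fun ω => sq_nonneg _, ?_⟩
  -- variance bound
  have hX'meas : Measurable (fun ω => D ω ^ 2 + 2 * (D ω * Γ ω - D ω * c ω)) :=
    (hDmeas.pow_const 2).add (((hDmeas.mul hΓmeas).sub (hDmeas.mul hcmeas)).const_mul 2)
  have hXae : AEStronglyMeasurable X μ :=
    hX'meas.aestronglyMeasurable.congr hXeq.symm
  have hXsq_le : ∀ᵐ ω ∂μ, X ω ^ 2 ≤ 16 * M ^ 2 * D ω ^ 2 := by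
    filter_upwards [hψstar, hΓbd, hcbd] with ω hψs hΓb hcb
    have h2 := hψbd (Z ω)
    have hE : |2 * Γ ω - ψ (Z ω) - c ω| ≤ 4 * M := by
      have := abs_le.mp hΓb
      have := abs_le.mp h2
      have := abs_le.mp hcb
      rw [abs_le]; constructor <;> linarith
    have hrw : X ω = D ω * (2 * Γ ω - ψ (Z ω) - c ω) := by
      rw [hX ω, hψs]
      simp only [hD_def]
      ring
    rw [hrw]
    have h4 : (2 * Γ ω - ψ (Z ω) - c ω) ^ 2 ≤ (4 * M) ^ 2 := by
      rcases abs_le.mp hE with ⟨ha, hb⟩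
      exact sq_le_sq' (by linarith) hb
    calc (D ω * (2 * Γ ω - ψ (Z ω) - c ω)) ^ 2
        = D ω ^ 2 * (2 * Γ ω - ψ (Z ω) - c ω) ^ 2 := by ring
      _ ≤ D ω ^ 2 * (4 * M) ^ 2 := mul_le_mul_of_nonneg_left h4 (sq_nonneg _)
      _ = 16 * M ^ 2 * D ω ^ 2 := by ring
  have hX2int : Integrable (fun ω => X ω ^ 2) μ := by
    refine my_integrable_of_bdd (C := 16 * M ^ 2 * (2 * M) ^ 2) ((hXae.mul hXae).congr ?_) ?_
    · filter_upwards with ω; simp [Pi.mul_apply, sq]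
    · filter_upwards [hXsq_le, hDbd] with ω h1 h2
      rw [abs_of_nonneg (sq_nonneg _)]
      have h3 : D ω ^ 2 ≤ (2 * M) ^ 2 := by
        rw [← sq_abs]; exact pow_le_pow_left₀ (abs_nonneg _) h2 2
      calc X ω ^ 2 ≤ 16 * M ^ 2 * D ω ^ 2 := h1
        _ ≤ 16 * M ^ 2 * (2 * M) ^ 2 := by nlinarith [sq_nonneg M]
  calc variance X μ ≤ μ[X ^ 2] := variance_le_expectation_sq hXae
    _ = ∫ ω, X ω ^ 2 ∂μ := rfl
    _ ≤ ∫ ω, 16 * M ^ 2 * D ω ^ 2 ∂μ :=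
        integral_mono_ae hX2int (hD2int.const_mul _) hXsq_le
    _ = 16 * M ^ 2 * ∫ ω, D ω ^ 2 ∂μ := integral_const_mul _ _
    _ = 16 * M ^ 2 * ∫ ω, X ω ∂μ := by rw [hintX]
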